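/- Let X be a finite graph. For every vertex x ∈ V, the sum over all edges e with s(e) = x of the projections π(e) vanishes: ∑_{e : s(e) = x} π(e) = 0 in Z₁(X,ℝ). -/

import Mathlib

/-- A graph in the sense of Sunada's topological crystallography: a set of vertices,
a set of edges, source and target maps, and a fixed-point free involution sending
each edge to its inverse. -/
structure SunadaGraph where
  V : Type
  E : Type
  s : E → V
  t : E → V
  inv : E → E
  s_inv : ∀ e, s (inv e) = t e
  t_inv : ∀ e, t (inv e) = s e
  inv_inv : ∀ e, inv (inv e) = e
  inv_ne : ∀ e, inv e ≠ e

namespace SunadaGraph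

variable (X : SunadaGraph)

/-- `X.IsPath x y γ` : the word of edges `γ` is a path from `x` to `y` in `X`. -/
inductive IsPath : X.V → X.V → List X.E → Prop
  | nil (x : X.V) : IsPath x x []
  | cons (e : X.E) {y : X.V} {γ : List X.E} (h : IsPath (X.t e) y γ) :
      IsPath (X.s e) y (e :: γ)

/-- A graph is connected if any two vertices are joined by a path. -/
def Connected : Prop := ∀ x y : X.V, ∃ γ : List X.E, X.IsPath x y γ

/-- An edge is a bridge if there is no path from its target to its source
avoiding both the edge and its inverse. -/
def IsBridge (e : X.E) : Prop :=
  ¬ ∃ γ : List X.E, X.IsPath (X.t e) (X.s e) γ ∧ e ∉ γ ∧ X.inv e ∉ γ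

/-- The space `C₁(X,ℝ)` of real 1-chains: formal linear combinations of edges
with `e⁻¹ = -e`, realized as finitely supported functions `c : E → ℝ` with
`c(e⁻¹) = - c(e)`. -/
noncomputable def C1 : Submodule ℝ (X.E →₀ ℝ) where
  carrier := {c | ∀ e, c (X.inv e) = - c e}
  add_mem' := by
    intro a b ha hb e
    simp only [Finsupp.add_apply, ha e, hb e]
    ring
  zero_mem' := by intro e; simp
  smul_mem' := by
    intro r c hc e
    simp only [Finsupp.smul_apply, hc e, smul_eq_mul]
    ring

/-- The 1-chain associated to a single edge. -/
noncomputable def edgeChain (e : X.E) : ↥X.C1 :=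
  ⟨Finsupp.single e 1 - Finsupp.single (X.inv e) 1, by
    intro f
    classical
    have h1 : (e = X.inv f) ↔ (X.inv e = f) := by
      constructor
      · rintro rfl; exact X.inv_inv f
      · rintro rfl; exact (X.inv_inv e).symm
    have h2 : (X.inv e = X.inv f) ↔ (e = f) := by
      constructor
      · intro h
        have := congrArg X.inv h
        rwa [X.inv_inv, X.inv_inv] at this
      · rintro rfl; rfl
    simp only [Finsupp.sub_apply, Finsupp.single_apply, h1, h2]
    ring⟩

/-- The 1-chain `c_γ` of a path `γ`. -/
noncomputable def pathChain (γ : List X.E) : ↥X.C1 := (γ.map X.edgeChain).sum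

/-- The inner product on `C₁(X,ℝ)` for which the edges form an orthonormal basis
(with `e⁻¹` counting as the negative of `e`). -/
noncomputable def chainInner (c d : ↥X.C1) : ℝ :=
  (1/2) * ((c : X.E →₀ ℝ).sum fun e x => x * (d : X.E →₀ ℝ) e)

/-- The boundary of a 1-chain. -/
noncomputable def boundary (c : ↥X.C1) : X.V →₀ ℝ :=
  (c : X.E →₀ ℝ).sum fun e x => x • (Finsupp.single (X.t e) (1:ℝ) - Finsupp.single (X.s e) 1)

/-- A 1-cycle is a 1-chain with vanishing boundary. -/
def IsCycle (c : ↥X.C1) : Prop := X.boundary c = 0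

/-- An integral 1-chain: all coefficients are integers. -/
def IsIntegral (c : ↥X.C1) : Prop := ∀ e, ∃ n : ℤ, (c : X.E →₀ ℝ) e = (n : ℝ)

/-- The support of a 1-chain: the set of edges with positive coefficient. -/
def chainSupp (c : ↥X.C1) : Set X.E := {e | 0 < (c : X.E →₀ ℝ) e}

/-- `p` is the orthogonal projection of `C₁(X,ℝ)` onto the space `Z₁(X,ℝ)` of 1-cycles:
it takes values in `Z₁(X,ℝ)` and `c - p c` is orthogonal to every 1-cycle. -/
def IsOrthoProj (p : ↥X.C1 → ↥X.C1) : Prop :=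
  (∀ c, X.IsCycle (p c)) ∧ (∀ c z, X.IsCycle z → X.chainInner (c - p c) z = 0)

/-- Two paths from `x` to `y` are homologous if one can be obtained from the other
by repeatedly inserting or deleting subwords `e e⁻¹`, and/or replacing a subword
`στ` by `τσ` where `σ` and `τ` are loops based at the same vertex. -/
inductive Homologous : X.V → X.V → List X.E → List X.E → Prop
  | refl {x y : X.V} (γ : List X.E) (h : X.IsPath x y γ) : Homologous x y γ γ
  | cancel {x y : X.V} (γ δ : List X.E) (e : X.E)
      (h : X.IsPath x y (γ ++ e :: X.inv e :: δ)) (h' : X.IsPath x y (γ ++ δ)) :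
      Homologous x y (γ ++ e :: X.inv e :: δ) (γ ++ δ)
  | swap {x y : X.V} (γ σ τ δ : List X.E) (v : X.V)
      (hσ : X.IsPath v v σ) (hτ : X.IsPath v v τ)
      (h : X.IsPath x y (γ ++ (σ ++ (τ ++ δ))))
      (h' : X.IsPath x y (γ ++ (τ ++ (σ ++ δ)))) :
      Homologous x y (γ ++ (σ ++ (τ ++ δ))) (γ ++ (τ ++ (σ ++ δ)))
  | symm {x y : X.V} {a b : List X.E} (h : Homologous x y a b) : Homologous x y b a
  | trans {x y : X.V} {a b c : List X.E} (h1 : Homologous x y a b)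
      (h2 : Homologous x y b c) : Homologous x y a c

/-- A simple path: no vertex is visited twice. -/
def IsSimplePath (x y : X.V) (γ : List X.E) : Prop :=
  X.IsPath x y γ ∧ (x :: γ.map X.t).Nodup

/-- A simple loop based at `x`: a loop in which every vertex other than `x` occurs
at most once and `x` occurs only as the initial and final vertex. -/
def IsSimpleLoop (x : X.V) (γ : List X.E) : Prop :=
  X.IsPath x x γ ∧ (x :: (γ.map X.t).dropLast).Nodup

/-- A reduced word: no subword of the form `e e⁻¹`. -/
def Reduced (γ : List X.E) : Prop := γ.Chain' (fun a b => b ≠ X.inv a)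

/-- A spanning tree: a set of edges, closed under inversion, such that the spanning
subgraph it determines is connected and has no nonempty reduced loops. -/
def IsSpanningTree (S : Set X.E) : Prop :=
  (∀ e ∈ S, X.inv e ∈ S) ∧
  (∀ x y : X.V, ∃ γ : List X.E, X.IsPath x y γ ∧ ∀ e ∈ γ, e ∈ S) ∧
  (∀ (x : X.V) (γ : List X.E), X.IsPath x x γ → (∀ e ∈ γ, e ∈ S) → X.Reduced γ → γ = [])

/-- The quotient of a set of 1-chains by the translation action of the
integral 1-cycles. -/
def transQuot (S : Set ↥X.C1) : Type :=
  Quot (fun a b : S => ∃ z : ↥X.C1, X.IsCycle z ∧ X.IsIntegral z ∧ (b : ↥X.C1) = (a : ↥X.C1) + z)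

/-! ### Auxiliary lemmas -/

section Aux

variable [Fintype X.E]

lemma chainInner_eq (c d : ↥X.C1) :
    X.chainInner c d = (1/2) * ∑ e : X.E, (c : X.E →₀ ℝ) e * (d : X.E →₀ ℝ) e := by
  unfold chainInner
  rw [Finsupp.sum_fintype]
  intro e; ring

/-- `chainInner · d` as an additive monoid hom. -/
noncomputable def innerHom (d : ↥X.C1) : ↥X.C1 →+ ℝ where
  toFun c := X.chainInner c d
  map_zero' := by simp [chainInner_eq]
  map_add' a b := by
    simp only [chainInner_eq, Submodule.coe_add, Finsupp.add_apply, add_mul,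
      Finset.sum_add_distrib, mul_add]

lemma boundary_eq (c : ↥X.C1) :
    X.boundary c = ∑ e : X.E, (c : X.E →₀ ℝ) e •
      (Finsupp.single (X.t e) (1:ℝ) - Finsupp.single (X.s e) 1) := by
  unfold boundary
  rw [Finsupp.sum_fintype]
  intro e; simp

lemma boundary_add (a b : ↥X.C1) :
    X.boundary (a + b) = X.boundary a + X.boundary b := by
  simp [boundary_eq, Finsupp.add_apply, add_smul, Finset.sum_add_distrib]

lemma boundary_zero : X.boundary 0 = 0 := by
  simp [boundary_eq]

lemma isCycle_sum {ι : Type*} (s : Finset ι) (f : ι → ↥X.C1)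
    (h : ∀ i ∈ s, X.IsCycle (f i)) : X.IsCycle (∑ i ∈ s, f i) :=
  Finset.sum_induction f X.IsCycle
    (fun a b ha hb => by
      unfold IsCycle at *
      rw [X.boundary_add, ha, hb, add_zero])
    (X.boundary_zero) h

lemma cycle_sum_source_eq_zero [DecidableEq X.V] (z : ↥X.C1) (hz : X.IsCycle z) (x : X.V) :
    ∑ e : X.E, (if X.s e = x then (z : X.E →₀ ℝ) e else 0) = 0 := by
  classical
  have h0 : (X.boundary z) x = 0 := by rw [hz]; simp
  rw [boundary_eq] at h0
  rw [Finset.sum_apply'] at h0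
  simp only [Finsupp.smul_apply, Finsupp.sub_apply, Finsupp.single_apply, smul_eq_mul] at h0
  -- h0 : ∑ e, z e * ((if t e = x then 1 else 0) - (if s e = x then 1 else 0)) = 0
  set f : X.E → ℝ := fun e => (z : X.E →₀ ℝ) e * (if X.t e = x then (1:ℝ) else 0) with hf
  set g : X.E → ℝ := fun e => (z : X.E →₀ ℝ) e * (if X.s e = x then (1:ℝ) else 0) with hg
  have hsub : ∑ e : X.E, f e - ∑ e : X.E, g e = 0 := by
    rw [← Finset.sum_sub_distrib]
    rw [← h0]
    apply Finset.sum_congr rfl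
    intro e _
    simp [hf, hg, mul_sub]
  have hι : ∑ e : X.E, f e = ∑ e : X.E, f (X.inv e) := by
    exact (Equiv.sum_comp (⟨X.inv, X.inv, X.inv_inv, X.inv_inv⟩ : X.E ≃ X.E) f).symm
  have hneg : ∑ e : X.E, f (X.inv e) = - ∑ e : X.E, g e := by
    rw [← Finset.sum_neg_distrib]
    apply Finset.sum_congr rfl
    intro e _
    have hz2 := z.2 e
    simp only [hf, hg, hz2, X.t_inv]
    ring
  have hS : ∑ e : X.E, g e = 0 := by
    have := hsub
    rw [hι, hneg] at this
    linarith
  have hfin : (∑ e : X.E, (if X.s e = x then (z : X.E →₀ ℝ) e else 0)) = ∑ e : X.E, g e := by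
    apply Finset.sum_congr rfl
    intro e _
    by_cases h : X.s e = x <;> simp [hg, h]
  rw [hfin, hS]

lemma chainInner_edgeChain (e : X.E) (z : ↥X.C1) :
    X.chainInner (X.edgeChain e) z = (z : X.E →₀ ℝ) e := by
  classical
  rw [chainInner_eq]
  have hcoe : ((X.edgeChain e : ↥X.C1) : X.E →₀ ℝ)
      = Finsupp.single e 1 - Finsupp.single (X.inv e) 1 := rfl
  rw [hcoe]
  simp only [Finsupp.sub_apply, Finsupp.single_apply, sub_mul, ite_mul, one_mul, zero_mul,
    Finset.sum_sub_distrib, Finset.sum_ite_eq, Finset.mem_univ, if_true]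
  rw [z.2 e]
  ring

lemma eq_zero_of_chainInner_self (z : ↥X.C1) (h : X.chainInner z z = 0) : z = 0 := by
  rw [chainInner_eq] at h
  have hsum : ∑ e : X.E, (z : X.E →₀ ℝ) e * (z : X.E →₀ ℝ) e = 0 := by linarith
  have hall : ∀ e ∈ Finset.univ, (z : X.E →₀ ℝ) e * (z : X.E →₀ ℝ) e = 0 :=
    (Finset.sum_eq_zero_iff_of_nonneg (fun e _ => mul_self_nonneg _)).1 hsum
  ext e
  have := hall e (Finset.mem_univ e)
  have : (z : X.E →₀ ℝ) e = 0 := by nlinarith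
  simpa using this

end Aux

end SunadaGraph


/-- In a finite graph, for every vertex `x` the projections to
`Z₁(X,ℝ)` of the edges with source `x` sum to zero. -/
theorem sum_proj_edges_from_vertex_eq_zero (X : SunadaGraph) [Fintype X.E] [DecidableEq X.V]
    (π : ↥X.C1 → ↥X.C1) (hπ : X.IsOrthoProj π) (x : X.V) :
    (∑ e : X.E, if X.s e = x then π (X.edgeChain e) else 0) = 0 := by
  classical
  set S : ↥X.C1 := ∑ e : X.E, if X.s e = x then π (X.edgeChain e) else 0 with hS
  set c : ↥X.C1 := ∑ e : X.E, if X.s e = x then X.edgeChain e else 0 with hc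
  have hScyc : X.IsCycle S :=
    X.isCycle_sum Finset.univ _ (fun e _ => by
      split
      · exact hπ.1 _
      · unfold SunadaGraph.IsCycle; exact X.boundary_zero)
  -- per-edge: ⟨edge, S⟩ = ⟨π edge, S⟩ by orthogonality
  have hterm : ∀ e : X.E, X.s e = x →
      X.innerHom S (X.edgeChain e) = X.innerHom S (π (X.edgeChain e)) := by
    intro e _
    have h1 : X.edgeChain e
        = (X.edgeChain e - π (X.edgeChain e)) + π (X.edgeChain e) := by abel
    have h2 : X.innerHom S (X.edgeChain e - π (X.edgeChain e)) = 0 :=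
      hπ.2 (X.edgeChain e) S hScyc
    conv_lhs => rw [h1]
    rw [map_add, h2, zero_add]
  -- inner product of c with S is zero since S is a cycle
  have hcS : X.chainInner c S = 0 := by
    have : X.innerHom S c = ∑ e : X.E, (if X.s e = x then ((S : ↥X.C1) : X.E →₀ ℝ) e else 0) := by
      rw [hc, map_sum]
      apply Finset.sum_congr rfl
      intro e _
      split
      · exact X.chainInner_edgeChain e S
      · exact map_zero (X.innerHom S)
    have h2 := X.cycle_sum_source_eq_zero S hScyc x
    show X.innerHom S c = 0
    rw [this, h2]
  -- hence ⟨S,S⟩ = 0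
  have hSS : X.chainInner S S = 0 := by
    have heq : X.innerHom S c = X.innerHom S S := by
      rw [hc, hS, map_sum, map_sum]
      apply Finset.sum_congr rfl
      intro e _
      by_cases he : X.s e = x
      · simp only [he, if_true]
        exact hterm e he
      · simp [he]
    have h2 : X.innerHom S c = 0 := hcS
    have : X.innerHom S S = 0 := by rw [← heq]; exact h2
    exact this
  exact X.eq_zero_of_chainInner_self S hSS
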